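/- Let (X, 𝒜) be a measurable space, let Q be a Markov (transition) kernel on X, and suppose Q satisfies a Doeblin minorization: there exist θ ∈ (0,1) and a probability measure ν on X such that Q(x, A) ≥ θ·ν(A) for every x ∈ X and every A ∈ 𝒜. Then for any two probability measures μ₁, μ₂ on X one has ‖Qμ₁ − Qμ₂‖_TV ≤ (1 − θ)·‖μ₁ − μ₂‖_TV. -/

import Mathlib

open MeasureTheory ProbabilityTheory

/-- Binding a probability measure with a Markov kernel yields a probability measure. -/
instance bindIsProbabilityMeasure {X : Type*} [MeasurableSpace X]
    (μ : Measure X) [IsProbabilityMeasure μ]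
    (Q : Kernel X X) [IsMarkovKernel Q] :
    IsProbabilityMeasure (μ.bind ⇑Q) := by
  constructor
  rw [Measure.bind_apply MeasurableSet.univ (Kernel.measurable Q).aemeasurable]
  simp

/-- **Doeblin contraction.** If a Markov kernel `Q` satisfies the minorization
`Q(x, A) ≥ θ·ν(A)` for a probability measure `ν` and some `θ ∈ (0,1)`, then for any two
probability measures `μ₁, μ₂` one has `‖Qμ₁ − Qμ₂‖_TV ≤ (1 − θ)·‖μ₁ − μ₂‖_TV`. -/
theorem doeblin_contraction
    {X : Type*} [MeasurableSpace X]
    (Q : Kernel X X) [IsMarkovKernel Q]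
    (θ : ℝ) (hθ : θ ∈ Set.Ioo (0:ℝ) 1)
    (ν : Measure X) [IsProbabilityMeasure ν]
    (hmin : ∀ x : X, ∀ A : Set X, MeasurableSet A →
      ENNReal.ofReal θ * ν A ≤ Q x A)
    (μ₁ μ₂ : Measure X) [IsProbabilityMeasure μ₁] [IsProbabilityMeasure μ₂] :
    ((μ₁.bind ⇑Q).toSignedMeasure - (μ₂.bind ⇑Q).toSignedMeasure).totalVariation Set.univ
      ≤ ENNReal.ofReal (1 - θ) *
        (μ₁.toSignedMeasure - μ₂.toSignedMeasure).totalVariation Set.univ := by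
  obtain ⟨hθ0, hθ1⟩ := hθ
  -- Hahn decomposition for `s = μ₁ - μ₂`
  obtain ⟨i, hi₁, hi₂, hi₃⟩ :=
    (μ₁.toSignedMeasure - μ₂.toSignedMeasure).exists_compl_positive_negative
  have key₁ : ∀ A : Set X, MeasurableSet A → A ⊆ i → μ₂ A ≤ μ₁ A := by
    intro A hA hAi
    have h := VectorMeasure.nonneg_of_zero_le_restrict _
      (VectorMeasure.zero_le_restrict_subset _ hi₁ hAi hi₂)
    rw [VectorMeasure.sub_apply, Measure.toSignedMeasure_apply_measurable hA,
      Measure.toSignedMeasure_apply_measurable hA, sub_nonneg] at h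
    exact (ENNReal.toReal_le_toReal (measure_ne_top _ _) (measure_ne_top _ _)).1 h
  have key₂ : ∀ A : Set X, MeasurableSet A → A ⊆ iᶜ → μ₁ A ≤ μ₂ A := by
    intro A hA hAi
    have h := VectorMeasure.nonpos_of_restrict_le_zero _
      (VectorMeasure.restrict_le_zero_subset _ hi₁.compl hAi hi₃)
    rw [VectorMeasure.sub_apply, Measure.toSignedMeasure_apply_measurable hA,
      Measure.toSignedMeasure_apply_measurable hA, sub_nonpos] at h
    exact (ENNReal.toReal_le_toReal (measure_ne_top _ _) (measure_ne_top _ _)).1 h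
  have hle₁ : μ₂.restrict i ≤ μ₁.restrict i := by
    refine Measure.le_iff.2 fun A hA => ?_
    rw [Measure.restrict_apply hA, Measure.restrict_apply hA]
    exact key₁ _ (hA.inter hi₁) Set.inter_subset_right
  have hle₂ : μ₁.restrict iᶜ ≤ μ₂.restrict iᶜ := by
    refine Measure.le_iff.2 fun A hA => ?_
    rw [Measure.restrict_apply hA, Measure.restrict_apply hA]
    exact key₂ _ (hA.inter hi₁.compl) Set.inter_subset_right
  set ρ : Measure X := μ₁.restrict i - μ₂.restrict i with hρdef
  set σ : Measure X := μ₂.restrict iᶜ - μ₁.restrict iᶜ with hσdef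
  haveI hρ_fin : IsFiniteMeasure ρ := isFiniteMeasure_of_le (μ₁.restrict i) Measure.sub_le
  haveI hσ_fin : IsFiniteMeasure σ := isFiniteMeasure_of_le (μ₂.restrict iᶜ) Measure.sub_le
  have hρ_add : μ₂.restrict i + ρ = μ₁.restrict i := by
    rw [add_comm]; exact Measure.sub_add_cancel_of_le hle₁
  have hσ_add : μ₁.restrict iᶜ + σ = μ₂.restrict iᶜ := by
    rw [add_comm]; exact Measure.sub_add_cancel_of_le hle₂
  have h1 : μ₂ i + ρ Set.univ = μ₁ i := by
    have := congrArg (fun m : Measure X => m Set.univ) hρ_add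
    simpa [Measure.restrict_apply_univ] using this
  have h2 : μ₁ iᶜ + σ Set.univ = μ₂ iᶜ := by
    have := congrArg (fun m : Measure X => m Set.univ) hσ_add
    simpa [Measure.restrict_apply_univ] using this
  have h3 : μ₁ i + μ₁ iᶜ = 1 := by rw [measure_add_measure_compl hi₁, measure_univ]
  have h4 : μ₂ i + μ₂ iᶜ = 1 := by rw [measure_add_measure_compl hi₁, measure_univ]
  set c : ENNReal := ρ Set.univ with hcdef
  have hc_ne_top : c ≠ ⊤ := by
    have : c ≤ 1 := by
      rw [← h3]
      calc c ≤ μ₂ i + ρ Set.univ := le_add_self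
        _ = μ₁ i := h1
        _ ≤ μ₁ i + μ₁ iᶜ := le_add_of_nonneg_right zero_le
    exact ne_top_of_le_ne_top ENNReal.one_ne_top this
  have hσc : σ Set.univ = c := by
    have hfin : μ₁ iᶜ + μ₂ i ≠ ⊤ := by finiteness
    have e1 : σ Set.univ + (μ₁ iᶜ + μ₂ i) = 1 := by
      calc σ Set.univ + (μ₁ iᶜ + μ₂ i) = (μ₁ iᶜ + σ Set.univ) + μ₂ i := by ring
        _ = μ₂ iᶜ + μ₂ i := by rw [h2]
        _ = 1 := by rw [add_comm]; exact h4
    have e2 : c + (μ₁ iᶜ + μ₂ i) = 1 := by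
      calc c + (μ₁ iᶜ + μ₂ i) = (μ₂ i + ρ Set.univ) + μ₁ iᶜ := by rw [hcdef]; ring
        _ = μ₁ i + μ₁ iᶜ := by rw [h1]
        _ = 1 := h3
    exact WithTop.add_right_cancel hfin (e1.trans e2.symm)
  -- mutual singularity and Jordan decomposition of `s`
  have hρσ : ρ ⟂ₘ σ := by
    refine ⟨iᶜ, hi₁.compl, ?_, ?_⟩
    · refine le_antisymm ?_ zero_le
      calc ρ iᶜ ≤ μ₁.restrict i iᶜ := Measure.le_iff'.1 Measure.sub_le iᶜ
        _ = μ₁ (iᶜ ∩ i) := Measure.restrict_apply hi₁.compl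
        _ = 0 := by rw [Set.compl_inter_self, measure_empty]
    · rw [compl_compl]
      refine le_antisymm ?_ zero_le
      calc σ i ≤ μ₂.restrict iᶜ i := Measure.le_iff'.1 Measure.sub_le i
        _ = μ₂ (i ∩ iᶜ) := Measure.restrict_apply hi₁
        _ = 0 := by rw [Set.inter_compl_self, measure_empty]
  set J : JordanDecomposition X :=
    ⟨ρ, σ, hρσ⟩ with hJdef
  have hmeq : ρ + μ₂ = σ + μ₁ := by
    calc ρ + μ₂ = ρ + (μ₂.restrict i + μ₂.restrict iᶜ) := by
          rw [Measure.restrict_add_restrict_compl hi₁]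
      _ = (μ₂.restrict i + ρ) + μ₂.restrict iᶜ := by abel
      _ = μ₁.restrict i + (μ₁.restrict iᶜ + σ) := by rw [hρ_add, hσ_add]
      _ = σ + (μ₁.restrict i + μ₁.restrict iᶜ) := by abel
      _ = σ + μ₁ := by rw [Measure.restrict_add_restrict_compl hi₁]
  have hJ : J.toSignedMeasure = μ₁.toSignedMeasure - μ₂.toSignedMeasure := by
    have h5 : ρ.toSignedMeasure + μ₂.toSignedMeasure
        = σ.toSignedMeasure + μ₁.toSignedMeasure := by
      rw [← Measure.toSignedMeasure_add, ← Measure.toSignedMeasure_add]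
      exact Measure.toSignedMeasure_congr hmeq
    have : J.toSignedMeasure = ρ.toSignedMeasure - σ.toSignedMeasure := rfl
    rw [this, sub_eq_sub_iff_add_eq_add]
    rw [h5]; abel
  have hsJ : (μ₁.toSignedMeasure - μ₂.toSignedMeasure).toJordanDecomposition = J := by
    rw [← hJ, JordanDecomposition.toJordanDecomposition_toSignedMeasure]
  have hTVs : (μ₁.toSignedMeasure - μ₂.toSignedMeasure).totalVariation Set.univ = c + c := by
    rw [SignedMeasure.totalVariation, hsJ]
    show (ρ + σ) Set.univ = c + c
    rw [Measure.add_apply, hσc]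
  -- the key one-set bound
  have hbound : ∀ A : Set X, MeasurableSet A →
      (μ₁.bind ⇑Q) A ≤ (μ₂.bind ⇑Q) A + ENNReal.ofReal (1 - θ) * c := by
    intro A hA
    have hfA : Measurable fun x => Q x A := Kernel.measurable_coe Q hA
    have hfAc : Measurable fun x => Q x Aᶜ := Kernel.measurable_coe Q hA.compl
    rw [Measure.bind_apply hA (Kernel.measurable Q).aemeasurable, Measure.bind_apply hA (Kernel.measurable Q).aemeasurable]
    have hμ₁split : ∫⁻ x, Q x A ∂μ₁ = ∫⁻ x, Q x A ∂(μ₂.restrict i)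
        + ∫⁻ x, Q x A ∂ρ + ∫⁻ x, Q x A ∂(μ₁.restrict iᶜ) := by
      conv_lhs => rw [← Measure.restrict_add_restrict_compl (μ := μ₁) hi₁, ← hρ_add]
      rw [lintegral_add_measure, lintegral_add_measure]
    have hμ₂split : ∫⁻ x, Q x A ∂μ₂ = ∫⁻ x, Q x A ∂(μ₂.restrict i)
        + ∫⁻ x, Q x A ∂(μ₁.restrict iᶜ) + ∫⁻ x, Q x A ∂σ := by
      conv_lhs => rw [← Measure.restrict_add_restrict_compl (μ := μ₂) hi₁, ← hσ_add]
      rw [lintegral_add_measure, lintegral_add_measure, add_assoc]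
    rw [hμ₁split, hμ₂split]
    have core : ∫⁻ x, Q x A ∂ρ ≤ ∫⁻ x, Q x A ∂σ + ENNReal.ofReal (1 - θ) * c := by
      have hsum : ∫⁻ x, Q x A ∂ρ + ∫⁻ x, Q x Aᶜ ∂ρ = c := by
        rw [← lintegral_add_left hfA]
        have hone : ∀ x, Q x A + Q x Aᶜ = 1 := fun x => by
          rw [measure_add_measure_compl hA, measure_univ]
        calc ∫⁻ x, Q x A + Q x Aᶜ ∂ρ = ∫⁻ _, 1 ∂ρ := lintegral_congr fun x => hone x
          _ = c := by rw [lintegral_one]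
      have hQA : ENNReal.ofReal θ * ν A * c ≤ ∫⁻ x, Q x A ∂σ := by
        calc ENNReal.ofReal θ * ν A * c = ∫⁻ _, ENNReal.ofReal θ * ν A ∂σ := by
              rw [lintegral_const, hσc]
          _ ≤ ∫⁻ x, Q x A ∂σ := lintegral_mono fun x => hmin x A hA
      have hQAc : ENNReal.ofReal θ * ν Aᶜ * c ≤ ∫⁻ x, Q x Aᶜ ∂ρ := by
        calc ENNReal.ofReal θ * ν Aᶜ * c = ∫⁻ _, ENNReal.ofReal θ * ν Aᶜ ∂ρ := by
              rw [lintegral_const]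
          _ ≤ ∫⁻ x, Q x Aᶜ ∂ρ := lintegral_mono fun x => hmin x Aᶜ hA.compl
      have harith : ENNReal.ofReal θ * ν A * c + ENNReal.ofReal (1 - θ) * c
          + ENNReal.ofReal θ * ν Aᶜ * c = c := by
        have hν : ν A + ν Aᶜ = 1 := by rw [measure_add_measure_compl hA, measure_univ]
        have hcoef : ENNReal.ofReal θ * ν A + ENNReal.ofReal (1 - θ)
            + ENNReal.ofReal θ * ν Aᶜ = 1 := by
          calc ENNReal.ofReal θ * ν A + ENNReal.ofReal (1 - θ) + ENNReal.ofReal θ * ν Aᶜ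
              = ENNReal.ofReal θ * (ν A + ν Aᶜ) + ENNReal.ofReal (1 - θ) := by ring
            _ = ENNReal.ofReal θ + ENNReal.ofReal (1 - θ) := by rw [hν, mul_one]
            _ = ENNReal.ofReal (θ + (1 - θ)) := (ENNReal.ofReal_add hθ0.le (by linarith)).symm
            _ = 1 := by norm_num
        calc ENNReal.ofReal θ * ν A * c + ENNReal.ofReal (1 - θ) * c
              + ENNReal.ofReal θ * ν Aᶜ * c
            = (ENNReal.ofReal θ * ν A + ENNReal.ofReal (1 - θ)
              + ENNReal.ofReal θ * ν Aᶜ) * c := by ring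
          _ = 1 * c := by rw [hcoef]
          _ = c := one_mul c
      have hkey : c ≤ (∫⁻ x, Q x A ∂σ + ENNReal.ofReal (1 - θ) * c) + ∫⁻ x, Q x Aᶜ ∂ρ := by
        calc c = ENNReal.ofReal θ * ν A * c + ENNReal.ofReal (1 - θ) * c
              + ENNReal.ofReal θ * ν Aᶜ * c := harith.symm
          _ ≤ (∫⁻ x, Q x A ∂σ + ENNReal.ofReal (1 - θ) * c) + ∫⁻ x, Q x Aᶜ ∂ρ :=
            add_le_add (add_le_add hQA le_rfl) hQAc
      have hfinAc : ∫⁻ x, Q x Aᶜ ∂ρ ≠ ⊤ :=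
        ne_top_of_le_ne_top hc_ne_top (le_of_le_of_eq le_add_self hsum)
      have heq : ∫⁻ x, Q x A ∂ρ = c - ∫⁻ x, Q x Aᶜ ∂ρ :=
        ENNReal.eq_sub_of_add_eq hfinAc hsum
      rw [heq]
      exact tsub_le_iff_right.2 hkey
    calc ∫⁻ x, Q x A ∂(μ₂.restrict i) + ∫⁻ x, Q x A ∂ρ + ∫⁻ x, Q x A ∂(μ₁.restrict iᶜ)
        ≤ ∫⁻ x, Q x A ∂(μ₂.restrict i)
          + (∫⁻ x, Q x A ∂σ + ENNReal.ofReal (1 - θ) * c)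
          + ∫⁻ x, Q x A ∂(μ₁.restrict iᶜ) :=
          add_le_add (add_le_add le_rfl core) le_rfl
      _ = (∫⁻ x, Q x A ∂(μ₂.restrict i) + ∫⁻ x, Q x A ∂(μ₁.restrict iᶜ)
          + ∫⁻ x, Q x A ∂σ) + ENNReal.ofReal (1 - θ) * c := by ring
  -- total variation of `t = Qμ₁ - Qμ₂`
  obtain ⟨j, hj₁, hj₂, hj₃, hjp, hjn⟩ :=
    ((μ₁.bind ⇑Q).toSignedMeasure - (μ₂.bind ⇑Q).toSignedMeasure).toJordanDecomposition_spec
  set t : SignedMeasure X := (μ₁.bind ⇑Q).toSignedMeasure - (μ₂.bind ⇑Q).toSignedMeasure with htdef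
  have htapp : ∀ A : Set X, MeasurableSet A →
      t A = ((μ₁.bind ⇑Q) A).toReal - ((μ₂.bind ⇑Q) A).toReal := by
    intro A hA
    rw [htdef, VectorMeasure.sub_apply, Measure.toSignedMeasure_apply_measurable hA,
      Measure.toSignedMeasure_apply_measurable hA]
    rfl
  have ht0 : t Set.univ = 0 := by
    rw [htapp _ MeasurableSet.univ]
    simp
  have hcompl : t jᶜ = - t j := by
    have := t.of_union disjoint_compl_right hj₁ hj₁.compl
    rw [Set.union_compl_self, ht0] at this
    linarith
  have htjle : t j ≤ (ENNReal.ofReal (1 - θ) * c).toReal := by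
    have hb := hbound j hj₁
    have hfin : ENNReal.ofReal (1 - θ) * c ≠ ⊤ := ENNReal.mul_ne_top ENNReal.ofReal_ne_top hc_ne_top
    have h6 : ((μ₁.bind ⇑Q) j).toReal
        ≤ ((μ₂.bind ⇑Q) j).toReal + (ENNReal.ofReal (1 - θ) * c).toReal := by
      rw [← ENNReal.toReal_add (measure_ne_top _ _) hfin]
      exact ENNReal.toReal_mono (by finiteness) hb
    rw [htapp j hj₁]
    linarith
  have hofj : ENNReal.ofReal (t j) ≤ ENNReal.ofReal (1 - θ) * c := by
    have hfin : ENNReal.ofReal (1 - θ) * c ≠ ⊤ := ENNReal.mul_ne_top ENNReal.ofReal_ne_top hc_ne_top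
    calc ENNReal.ofReal (t j) ≤ ENNReal.ofReal ((ENNReal.ofReal (1 - θ) * c).toReal) :=
          ENNReal.ofReal_le_ofReal htjle
      _ = ENNReal.ofReal (1 - θ) * c := ENNReal.ofReal_toReal hfin
  have hTVt : t.totalVariation Set.univ = ENNReal.ofReal (t j) + ENNReal.ofReal (t j) := by
    rw [SignedMeasure.totalVariation, Measure.add_apply, hjp, hjn,
      SignedMeasure.toMeasureOfZeroLE_apply _ hj₂ hj₁ MeasurableSet.univ,
      SignedMeasure.toMeasureOfLEZero_apply _ hj₃ hj₁.compl MeasurableSet.univ]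
    have e1 : t (j ∩ Set.univ) = t j := by rw [Set.inter_univ]
    have e2 : -t (jᶜ ∩ Set.univ) = t j := by rw [Set.inter_univ, hcompl, neg_neg]
    have p1 : (0:ℝ) ≤ t (j ∩ Set.univ) := by
      rw [e1]
      exact VectorMeasure.nonneg_of_zero_le_restrict _
        (VectorMeasure.zero_le_restrict_subset _ hj₁ subset_rfl hj₂)
    have p2 : (0:ℝ) ≤ -t (jᶜ ∩ Set.univ) := by rw [e2, ← e1]; exact p1
    rw [← ENNReal.ofReal_eq_coe_nnreal p1, ← ENNReal.ofReal_eq_coe_nnreal p2, e1, e2]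
  rw [hTVt, hTVs]
  calc ENNReal.ofReal (t j) + ENNReal.ofReal (t j)
      ≤ ENNReal.ofReal (1 - θ) * c + ENNReal.ofReal (1 - θ) * c := add_le_add hofj hofj
    _ = ENNReal.ofReal (1 - θ) * (c + c) := by ring
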